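/- Let 𝒮 ⊂ ℝⁿ be a compact set of positive Lebesgue measure and T a continuous probability density on 𝒮. Let (𝒫^{(m)})_{m∈ℕ} be a sequence of finite partitions of 𝒮 into measurable sets of positive Lebesgue measure (pairwise intersections of measure zero) whose maximum cell diameter tends to 0 as m → ∞, and let p^{(m)} be the discretization of T over 𝒫^{(m)}. Then KL_D(p^{(m)}‖p^{u,(m)}) → KL(T‖U) as m → ∞. -/

import Mathlib

open MeasureTheory Real Finset Filter

noncomputable section

/-- convergence of the discretized KL divergence to uniform: along any
sequence of partitions whose maximum cell diameter tends to `0`, the discrete KL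
divergence to uniform of the discretization of `T` converges to `KL(T‖U)`. -/
theorem discretized_kl_tendsto_kl
    (n : ℕ)
    (𝒮 : Set (Fin n → ℝ))
    (hcomp : IsCompact 𝒮) (hpos : 0 < volume 𝒮)
    (T : (Fin n → ℝ) → ℝ)
    (hTcont : ContinuousOn T 𝒮)
    (hTnonneg : ∀ s ∈ 𝒮, 0 ≤ T s)
    (hTint : (∫ s in 𝒮, T s) = 1)
    -- the sequence of partitions
    (N : ℕ → ℕ)
    (cell : (m : ℕ) → Fin (N m) → Set (Fin n → ℝ))
    (hmeas : ∀ m i, MeasurableSet (cell m i))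
    (hcellpos : ∀ m i, 0 < volume (cell m i))
    (hcover : ∀ m, (⋃ i, cell m i) = 𝒮)
    (hdisj : ∀ m, ∀ i j : Fin (N m), i ≠ j → volume (cell m i ∩ cell m j) = 0)
    -- maximum cell diameter tends to 0
    (hmesh : Tendsto (fun m => ⨆ i : Fin (N m), EMetric.diam (cell m i)) atTop (nhds 0)) :
    Tendsto
      (fun m => ∑ i : Fin (N m),
        (∫ s in cell m i, T s) *
          Real.log ((∫ s in cell m i, T s) * (volume 𝒮).toReal / (volume (cell m i)).toReal))
      atTop
      (nhds (∫ s in 𝒮, T s * Real.log (T s * (volume 𝒮).toReal))) := by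
  have hSfin : volume 𝒮 < ⊤ := hcomp.measure_lt_top
  set V : ℝ := (volume 𝒮).toReal with hVdef
  have hVpos : 0 < V := ENNReal.toReal_pos hpos.ne' hSfin.ne
  -- subsets
  have hsub : ∀ m i, cell m i ⊆ 𝒮 := fun m i => (hcover m) ▸ Set.subset_iUnion _ i
  -- bound on T
  obtain ⟨s0, hs0⟩ : 𝒮.Nonempty := nonempty_of_measure_ne_zero hpos.ne'
  obtain ⟨M, hM⟩ := hcomp.exists_bound_of_continuousOn hTcont
  have hM0 : 0 ≤ M := le_trans (abs_nonneg _) ((Real.norm_eq_abs _ ▸ hM s0 hs0))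
  have hTmem : ∀ s ∈ 𝒮, T s ∈ Set.Icc (0:ℝ) M := fun s hs =>
    ⟨hTnonneg s hs, le_trans (le_abs_self _) (Real.norm_eq_abs _ ▸ hM s hs)⟩
  -- the function f
  set f : ℝ → ℝ := fun x => x * Real.log x + x * Real.log V with hfdef
  have hfcont : Continuous f := Real.continuous_mul_log.add (continuous_id.mul continuous_const)
  have hfeq : ∀ x : ℝ, 0 ≤ x → x * Real.log (x * V) = f x := by
    intro x hx
    rcases eq_or_lt_of_le hx with h | h
    · simp [hfdef, ← h]
    · rw [Real.log_mul h.ne' hVpos.ne', hfdef]; ring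
  -- integrability
  have hTint' : IntegrableOn T 𝒮 := hTcont.integrableOn_compact hcomp
  have hfTcont : ContinuousOn (fun s => f (T s)) 𝒮 := hfcont.comp_continuousOn hTcont
  have hfTint : IntegrableOn (fun s => f (T s)) 𝒮 := hfTcont.integrableOn_compact hcomp
  -- rewrite the RHS
  have hRHS : (∫ s in 𝒮, T s * Real.log (T s * V)) = ∫ s in 𝒮, f (T s) := by
    refine setIntegral_congr_fun hcomp.isClosed.measurableSet (fun s hs => ?_)
    exact hfeq _ (hTnonneg s hs)
  rw [show (∫ s in 𝒮, T s * Real.log (T s * (volume 𝒮).toReal)) = ∫ s in 𝒮, f (T s) from hRHS]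
  -- decomposition of the integral over cells
  have hdecomp : ∀ m, (∫ s in 𝒮, f (T s)) = ∑ i : Fin (N m), ∫ s in cell m i, f (T s) := by
    intro m
    rw [← hcover m, integral_iUnion_ae (fun i => (hmeas m i).nullMeasurableSet)
      (fun i j hij => hdisj m i j hij) (by rw [hcover m]; exact hfTint), tsum_fintype]
  -- main estimate
  rw [Metric.tendsto_atTop]
  intro ε hε
  set ε' : ℝ := ε / (V + 1) with hε'def
  have hε'pos : 0 < ε' := div_pos hε (by linarith)
  -- uniform continuity of f on [0, M]
  obtain ⟨δ₁, hδ₁pos, hδ₁⟩ := Metric.uniformContinuousOn_iff_le.1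
    (isCompact_Icc.uniformContinuousOn_of_continuous (hfcont.continuousOn (s := Set.Icc (0:ℝ) M)))
    ε' hε'pos
  -- uniform continuity of T on 𝒮
  obtain ⟨δ, hδpos, hδ⟩ := Metric.uniformContinuousOn_iff_le.1
    (hcomp.uniformContinuousOn_of_continuous hTcont) δ₁ hδ₁pos
  -- mesh eventually small
  have hmesh' : ∀ᶠ m in atTop, (⨆ i : Fin (N m), EMetric.diam (cell m i)) < ENNReal.ofReal δ := by
    exact hmesh.eventually_lt_const (by simp [hδpos])
  obtain ⟨m₀, hm₀⟩ := eventually_atTop.1 hmesh'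
  refine ⟨m₀, fun m hm => ?_⟩
  -- per-cell notation
  set p : Fin (N m) → ℝ := fun i => ∫ s in cell m i, T s with hpdef
  set lam : Fin (N m) → ℝ := fun i => (volume (cell m i)).toReal with hlamdef
  have hcellfin : ∀ i, volume (cell m i) < ⊤ :=
    fun i => lt_of_le_of_lt (measure_mono (hsub m i)) hSfin
  have hlampos : ∀ i, 0 < lam i := fun i => ENNReal.toReal_pos (hcellpos m i).ne' (hcellfin i).ne
  set a : Fin (N m) → ℝ := fun i => p i / lam i with hadef
  have hTiint : ∀ i, IntegrableOn T (cell m i) := fun i => hTint'.mono_set (hsub m i)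
  have hfTiint : ∀ i, IntegrableOn (fun s => f (T s)) (cell m i) :=
    fun i => hfTint.mono_set (hsub m i)
  have hpnonneg : ∀ i, 0 ≤ p i := fun i =>
    setIntegral_nonneg (hmeas m i) (fun s hs => hTnonneg s (hsub m i hs))
  -- a i ∈ [0, M]
  have hpa : ∀ i, p i = lam i * a i := by
    intro i
    show p i = lam i * (p i / lam i)
    rw [eq_comm, mul_comm, div_mul_cancel₀ _ (hlampos i).ne']
  have hple : ∀ i, p i ≤ M * lam i := by
    intro i
    calc p i ≤ ‖p i‖ := Real.norm_eq_abs (p i) ▸ le_abs_self _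
    _ ≤ M * lam i := norm_setIntegral_le_of_norm_le_const (hcellfin i)
        (fun s hs => hM s (hsub m i hs))
  have hamem : ∀ i, a i ∈ Set.Icc (0:ℝ) M := by
    intro i
    constructor
    · exact div_nonneg (hpnonneg i) (hlampos i).le
    · show p i / lam i ≤ M
      rw [div_le_iff₀ (hlampos i)]
      exact hple i
  -- diameter bound: points in the same cell are δ-close
  have hdiam : ∀ i, ∀ u ∈ cell m i, ∀ s ∈ cell m i, dist u s ≤ δ := by
    intro i u hu s hs
    have h1 : EMetric.diam (cell m i) < ENNReal.ofReal δ :=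
      lt_of_le_of_lt (le_iSup (fun j => EMetric.diam (cell m j)) i) (hm₀ m hm)
    have h2 : edist u s ≤ ENNReal.ofReal δ := (EMetric.edist_le_diam_of_mem hu hs).trans h1.le
    have h3 := ENNReal.toReal_mono ENNReal.ofReal_ne_top h2
    rw [ENNReal.toReal_ofReal hδpos.le] at h3
    rw [dist_edist]
    exact h3
  -- |a i - T s| ≤ δ₁ for s in cell i
  have hakey : ∀ i, ∀ s ∈ cell m i, |a i - T s| ≤ δ₁ := by
    intro i s hs
    have hint : (∫ u in cell m i, (T u - T s)) = p i - T s * lam i := by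
      rw [integral_sub (hTiint i) (integrableOn_const (hcellfin i).ne)]
      simp [hpdef, hlamdef, mul_comm]
      exact Or.inl rfl
    have hbound : ‖∫ u in cell m i, (T u - T s)‖ ≤ δ₁ * lam i := by
      refine norm_setIntegral_le_of_norm_le_const (hcellfin i) (fun u hu => ?_)
      rw [Real.norm_eq_abs, ← Real.dist_eq]
      exact hδ u (hsub m i hu) s (hsub m i hs) (hdiam i u hu s hs)
    have : |p i - T s * lam i| ≤ δ₁ * lam i := by rwa [hint, Real.norm_eq_abs] at hbound
    have h3 : a i - T s = (p i - T s * lam i) / lam i := by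
      show p i / lam i - T s = (p i - T s * lam i) / lam i
      field_simp [(hlampos i).ne']
    rw [h3, abs_div, abs_of_pos (hlampos i), div_le_iff₀ (hlampos i)]
    linarith [this]
  -- |f (a i) - f (T s)| ≤ ε' for s in cell i
  have hfkey : ∀ i, ∀ s ∈ cell m i, |f (a i) - f (T s)| ≤ ε' := by
    intro i s hs
    rw [← Real.dist_eq]
    exact hδ₁ (a i) (hamem i) (T s) (hTmem s (hsub m i hs))
      (by rw [Real.dist_eq]; exact hakey i s hs)
  -- term rewriting: p i * log (p i * V / lam i) = lam i * f (a i)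
  have hterm : ∀ i, p i * Real.log (p i * V / lam i) = lam i * f (a i) := by
    intro i
    have h1 : p i * V / lam i = a i * V := by
      show p i * V / lam i = p i / lam i * V
      ring
    rw [h1, hpa i, mul_assoc, hfeq (a i) (hamem i).1]
  -- per-cell error bound
  have hcellbd : ∀ i, |lam i * f (a i) - ∫ s in cell m i, f (T s)| ≤ ε' * lam i := by
    intro i
    have hconst : lam i * f (a i) = ∫ _ in cell m i, f (a i) := by
      rw [setIntegral_const, smul_eq_mul]; rfl
    rw [hconst, ← integral_sub (integrableOn_const (C := f (a i)) (hcellfin i).ne) (hfTiint i)]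
    rw [← Real.norm_eq_abs]
    exact norm_setIntegral_le_of_norm_le_const (hcellfin i)
      (fun s hs => by rw [Real.norm_eq_abs]; exact hfkey i s hs)
  -- sum of lam = V
  have hsumlam : ∑ i : Fin (N m), lam i = V := by
    have h1 : volume 𝒮 = ∑ i : Fin (N m), volume (cell m i) := by
      rw [← hcover m, measure_iUnion₀ (fun i j hij => hdisj m i j hij)
        (fun i => (hmeas m i).nullMeasurableSet), tsum_fintype]
    rw [hVdef, h1, ENNReal.toReal_sum (fun i _ => (hcellfin i).ne)]
  -- conclude
  rw [Real.dist_eq, hdecomp m]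
  have hsum : ∀ i : Fin (N m), (∫ s in cell m i, T s) *
      Real.log ((∫ s in cell m i, T s) * V / (volume (cell m i)).toReal)
      = lam i * f (a i) := fun i => hterm i
  calc |(∑ i : Fin (N m), (∫ s in cell m i, T s) *
          Real.log ((∫ s in cell m i, T s) * V / (volume (cell m i)).toReal))
        - ∑ i : Fin (N m), ∫ s in cell m i, f (T s)|
      = |∑ i : Fin (N m), (lam i * f (a i) - ∫ s in cell m i, f (T s))| := by
        rw [Finset.sum_sub_distrib]
        congr 1
        congr 1
        exact Finset.sum_congr rfl (fun i _ => hsum i)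
    _ ≤ ∑ i : Fin (N m), |lam i * f (a i) - ∫ s in cell m i, f (T s)| :=
        Finset.abs_sum_le_sum_abs _ _
    _ ≤ ∑ i : Fin (N m), ε' * lam i := Finset.sum_le_sum (fun i _ => hcellbd i)
    _ = ε' * V := by rw [← Finset.mul_sum, hsumlam]
    _ < ε := by
        rw [hε'def, div_mul_eq_mul_div, div_lt_iff₀ (by linarith : (0:ℝ) < V + 1)]
        nlinarith
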